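/- Let d be a squarefree integer with d ∉ {0,1}. If there exist rational numbers x, y with d·y² = f₁₈(x), then d > 0 and d ≡ 1 (mod 24) or d ≡ 9 (mod 24). -/

import Mathlib

private lemma sqfree_rat_int (d N : ℤ) (hd : Squarefree d) (q : ℚ)
    (hq : (d : ℚ) * q ^ 2 = (N : ℚ)) : ∃ z : ℤ, d * z ^ 2 = N := by
  have hdenpos : (0 : ℚ) < (q.den : ℚ) := by exact_mod_cast q.pos
  have hden0 : ((q.den : ℚ)) ≠ 0 := ne_of_gt hdenpos
  have h3 : (q.num : ℚ) = q * (q.den : ℚ) := (Rat.mul_den_eq_num q).symm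
  have keyQ : (d : ℚ) * (q.num : ℚ) ^ 2 = (N : ℚ) * (q.den : ℚ) ^ 2 := by
    linear_combination ((q.den : ℚ)) ^ 2 * hq +
      (d : ℚ) * ((q.num : ℚ) + q * (q.den : ℚ)) * h3
  have key : d * q.num ^ 2 = N * (q.den : ℤ) ^ 2 := by exact_mod_cast keyQ
  have hcop : IsCoprime (q.num) ((q.den : ℤ)) := by
    rw [Int.isCoprime_iff_gcd_eq_one]
    simpa [Int.gcd] using q.reduced
  have hdvd : ((q.den : ℤ)) ^ 2 ∣ d := by
    have h1 : ((q.den : ℤ)) ^ 2 ∣ d * q.num ^ 2 := ⟨N, by linarith⟩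
    exact (hcop.symm.pow).dvd_of_dvd_mul_right h1
  have hu : IsUnit ((q.den : ℤ)) := hd _ (by rwa [pow_two] at hdvd)
  have hpos : (0 : ℤ) < (q.den : ℤ) := by exact_mod_cast q.pos
  have hone : ((q.den : ℤ)) = 1 := by
    rcases Int.isUnit_iff.mp hu with h | h <;> omega
  exact ⟨q.num, by rw [key, hone]; ring⟩

private lemma F8val : ∀ A B : ZMod 8,
    ((ZMod.castHom (by norm_num : (2:ℕ) ∣ 8) (ZMod 2)) A ≠ 0 ∨
      (ZMod.castHom (by norm_num : (2:ℕ) ∣ 8) (ZMod 2)) B ≠ 0) →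
    A^6 + 2*A^5*B + 5*A^4*B^2 + 10*A^3*B^3 + 10*A^2*B^4 + 4*A*B^5 + B^6 = 1 := by decide

private lemma unit8 : ∀ D Z : ZMod 8, D * Z ^ 2 = 1 → D = 1 := by decide

private lemma F9val : ∀ A B : ZMod 9,
    ((ZMod.castHom (by norm_num : (3:ℕ) ∣ 9) (ZMod 3)) A ≠ 0 ∨
      (ZMod.castHom (by norm_num : (3:ℕ) ∣ 9) (ZMod 3)) B ≠ 0) →
    (A^6 + 2*A^5*B + 5*A^4*B^2 + 10*A^3*B^3 + 10*A^2*B^4 + 4*A*B^5 + B^6 ≠ 0 ∧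
      ((ZMod.castHom (by norm_num : (3:ℕ) ∣ 9) (ZMod 3))
        (A^6 + 2*A^5*B + 5*A^4*B^2 + 10*A^3*B^3 + 10*A^2*B^4 + 4*A*B^5 + B^6) = 0 ∨
       (ZMod.castHom (by norm_num : (3:ℕ) ∣ 9) (ZMod 3))
        (A^6 + 2*A^5*B + 5*A^4*B^2 + 10*A^3*B^3 + 10*A^2*B^4 + 4*A*B^5 + B^6) = 1)) := by
  decide

private lemma d9val : ∀ D Z W : ZMod 9, D * Z ^ 2 = W → W ≠ 0 →
    ((ZMod.castHom (by norm_num : (3:ℕ) ∣ 9) (ZMod 3)) W = 0 ∨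
      (ZMod.castHom (by norm_num : (3:ℕ) ∣ 9) (ZMod 3)) W = 1) →
    ((ZMod.castHom (by norm_num : (3:ℕ) ∣ 9) (ZMod 3)) D = 0 ∨
      (ZMod.castHom (by norm_num : (3:ℕ) ∣ 9) (ZMod 3)) D = 1) := by decide

private lemma c24val : ∀ u : ZMod 24,
    (ZMod.castHom (by norm_num : (8:ℕ) ∣ 24) (ZMod 8)) u = 1 →
    ((ZMod.castHom (by norm_num : (3:ℕ) ∣ 24) (ZMod 3)) u = 0 ∨
      (ZMod.castHom (by norm_num : (3:ℕ) ∣ 24) (ZMod 3)) u = 1) →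
    u = 1 ∨ u = 9 := by decide

/-- Congruence conditions for rational points on twists of `X₁(18)` (Krumm):
if `d` is squarefree, `d ∉ {0,1}`, and `d·y² = f₁₈(x)` has a rational solution,
then `d > 0` and `d ≡ 1` or `9 (mod 24)`. -/
theorem twist_X1_18_congruence (d : ℤ) (hd : Squarefree d) (hd0 : d ≠ 0) (hd1 : d ≠ 1)
    (h : ∃ x y : ℚ, (d : ℚ) * y ^ 2 =
      x ^ 6 + 2 * x ^ 5 + 5 * x ^ 4 + 10 * x ^ 3 + 10 * x ^ 2 + 4 * x + 1) :
    0 < d ∧ (d ≡ 1 [ZMOD 24] ∨ d ≡ 9 [ZMOD 24]) := by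
  obtain ⟨x, y, hxy⟩ := h
  have hfpos : (0:ℚ) < x ^ 6 + 2 * x ^ 5 + 5 * x ^ 4 + 10 * x ^ 3 + 10 * x ^ 2 + 4 * x + 1 := by
    nlinarith [sq_nonneg (2 + 4*x - x^3), sq_nonneg (12*x + 11*x^2),
      sq_nonneg (47*x^2 + 24*x^3), sq_nonneg (x^3)]
  have hdposQ : (0:ℚ) < (d : ℚ) := by
    by_contra hle
    push_neg at hle
    nlinarith [mul_nonneg (neg_nonneg.mpr hle) (sq_nonneg y)]
  have hdpos : 0 < d := by exact_mod_cast hdposQ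
  -- clear denominators
  have hdenpos : (0 : ℚ) < (x.den : ℚ) := by exact_mod_cast x.pos
  have hden0 : ((x.den : ℚ)) ≠ 0 := ne_of_gt hdenpos
  have hx3 : (x.num : ℚ) = x * (x.den : ℚ) := (Rat.mul_den_eq_num x).symm
  set a : ℤ := x.num with ha
  set b : ℤ := (x.den : ℤ) with hb
  have hNQ : (d : ℚ) * (y * (x.den : ℚ) ^ 3) ^ 2 =
      ((a^6 + 2*a^5*b + 5*a^4*b^2 + 10*a^3*b^3 + 10*a^2*b^4 + 4*a*b^5 + b^6 : ℤ) : ℚ) := by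
    push_cast [ha, hb]
    rw [hx3]
    linear_combination ((x.den : ℚ)) ^ 6 * hxy
  obtain ⟨z, hz⟩ := sqfree_rat_int d _ hd _ hNQ
  -- coprimality of a and b
  have hg : Int.gcd a b = 1 := by simpa [ha, hb, Int.gcd] using x.reduced
  have hndvd : ∀ p : ℤ, p ∣ a → p ∣ b → p ∣ 1 := by
    intro p h1 h2
    have := Int.dvd_coe_gcd h1 h2
    rwa [hg] at this
  -- mod 8
  have h8 := congrArg (fun t : ℤ => (t : ZMod 8)) hz
  push_cast at h8
  have hcond8 : ((ZMod.castHom (by norm_num : (2:ℕ) ∣ 8) (ZMod 2)) ((a : ZMod 8)) ≠ 0 ∨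
      (ZMod.castHom (by norm_num : (2:ℕ) ∣ 8) (ZMod 2)) ((b : ZMod 8)) ≠ 0) := by
    by_contra hcon
    push_neg at hcon
    obtain ⟨e1, e2⟩ := hcon
    rw [map_intCast, ZMod.intCast_zmod_eq_zero_iff_dvd] at e1 e2
    have := hndvd 2 e1 e2
    norm_num at this
  have hF8 := F8val _ _ hcond8
  have hd8 : (d : ZMod 8) = 1 := unit8 _ (z : ZMod 8) (by rw [h8, hF8])
  -- mod 9
  have h9 := congrArg (fun t : ℤ => (t : ZMod 9)) hz
  push_cast at h9
  have hcond9 : ((ZMod.castHom (by norm_num : (3:ℕ) ∣ 9) (ZMod 3)) ((a : ZMod 9)) ≠ 0 ∨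
      (ZMod.castHom (by norm_num : (3:ℕ) ∣ 9) (ZMod 3)) ((b : ZMod 9)) ≠ 0) := by
    by_contra hcon
    push_neg at hcon
    obtain ⟨e1, e2⟩ := hcon
    rw [map_intCast, ZMod.intCast_zmod_eq_zero_iff_dvd] at e1 e2
    have := hndvd 3 e1 e2
    norm_num at this
  obtain ⟨hW0, hW3⟩ := F9val _ _ hcond9
  have hd9 := d9val (d : ZMod 9) (z : ZMod 9) _ h9 hW0 hW3
  rw [map_intCast] at hd9
  -- combine mod 24
  have hc8 : (ZMod.castHom (by norm_num : (8:ℕ) ∣ 24) (ZMod 8)) ((d : ZMod 24)) = 1 := by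
    rw [map_intCast]; exact hd8
  have hc3 : ((ZMod.castHom (by norm_num : (3:ℕ) ∣ 24) (ZMod 3)) ((d : ZMod 24)) = 0 ∨
      (ZMod.castHom (by norm_num : (3:ℕ) ∣ 24) (ZMod 3)) ((d : ZMod 24)) = 1) := by
    rw [map_intCast]
    exact hd9
  have h24 := c24val _ hc8 hc3
  refine ⟨hdpos, ?_⟩
  rcases h24 with h24 | h24
  · left
    have := (ZMod.intCast_eq_intCast_iff d 1 24).mp (by rw [Int.cast_one]; exact h24)
    exact_mod_cast this
  · right
    have := (ZMod.intCast_eq_intCast_iff d 9 24).mp (by exact_mod_cast h24)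
    exact_mod_cast this
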